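/- Let n, r, p be positive integers with r ≤ n. There exists a (p, 0)-data structure (i.e., noiseless, with error probability ε = 0) for the inner product problem IP_{n,r} of length N = B(n, ⌈r/p⌉): the encoding lists the bit x·z mod 2 for every z ∈ {0,1}^n of Hamming weight at most ⌈r/p⌉, and every query y with |y| ≤ r can be answered exactly by p probes. -/

import Mathlib

/-- Hamming weight of a bit string. -/
def wt {n : ℕ} (y : Fin n → Bool) : ℕ := (Finset.univ.filter (fun i => y i = true)).card

/-- Inner product mod 2 of two bit strings, as an element of `ZMod 2`. -/
def ip {n : ℕ} (x y : Fin n → Bool) : ZMod 2 := ∑ i, if x i && y i then 1 else 0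

/-- The sequence of answers obtained by the (adaptive) decoder probing the string `y`
on query `q` with seed `s`: the `k`-th probe position may depend on the query, the seed,
and the previous `k` answers. -/
def runAns {N p : ℕ} {Q S : Type} (probe : (k : Fin p) → Q → S → (Fin k.val → Bool) → Fin N)
    (y : Fin N → Bool) (q : Q) (s : S) : (k : Fin p) → Bool
  | k => y (probe k q s (fun j => runAns probe y q s ⟨j.val, j.isLt.trans k.isLt⟩))
  termination_by k => k.val

/-- A `(p,δ,ε)`-error-correcting data structure of length `N` for `f : D → Q → A`:
an encoding `enc : D → {0,1}^N` together with a randomized decoder (seed set `Fin seeds`,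
adaptive probe-choice functions, and an output function) such that for every query `q`,
every data item `x`, and every `y ∈ {0,1}^N` within Hamming distance `δN` of `enc x`,
the decoder outputs `f x q` with probability at least `1 - ε` over a uniform seed. -/
structure ECDS (D Q A : Type) [DecidableEq A] (p N : ℕ) (δ ε : ℝ) (f : D → Q → A) where
  enc : D → (Fin N → Bool)
  seeds : ℕ
  seeds_pos : 0 < seeds
  probe : (k : Fin p) → Q → Fin seeds → (Fin k.val → Bool) → Fin N
  out : Q → Fin seeds → (Fin p → Bool) → A
  correct : ∀ (q : Q) (x : D) (y : Fin N → Bool),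
    (hammingDist y (enc x) : ℝ) ≤ δ * N →
    (1 - ε) * (seeds : ℝ) ≤
      ((Finset.univ.filter (fun s : Fin seeds =>
        out q s (runAns probe y q s) = f x q)).card : ℝ)

namespace IPDS


def supp {n : ℕ} (y : Fin n → Bool) : Finset (Fin n) := Finset.univ.filter (fun i => y i = true)

lemma mem_supp {n : ℕ} {y : Fin n → Bool} {i : Fin n} : i ∈ supp y ↔ y i = true := by
  simp [supp]

lemma wt_eq_card {n : ℕ} (y : Fin n → Bool) : wt y = (supp y).card := rfl

def boolEquivFinset (n : ℕ) : (Fin n → Bool) ≃ Finset (Fin n) where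
  toFun := supp
  invFun s := fun i => decide (i ∈ s)
  left_inv z := by funext i; simp [supp]
  right_inv s := by ext i; simp [supp]

lemma card_wtle (n t : ℕ) :
    Fintype.card {z : Fin n → Bool // wt z ≤ t} = ∑ i ∈ Finset.range (t+1), n.choose i := by
  have e : {z : Fin n → Bool // wt z ≤ t} ≃ {s : Finset (Fin n) // s.card ≤ t} :=
    (boolEquivFinset n).subtypeEquiv (fun z => by rw [wt_eq_card]; rfl)
  rw [Fintype.card_congr e, Fintype.card_subtype]
  have hfil : (Finset.univ.filter (fun s : Finset (Fin n) => s.card ≤ t)) =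
      (Finset.range (t+1)).biUnion (fun i => Finset.powersetCard i Finset.univ) := by
    ext s
    simp [Finset.mem_powersetCard_univ, Nat.lt_succ_iff]
  rw [hfil, Finset.card_biUnion]
  · apply Finset.sum_congr rfl
    intro i _
    simp [Finset.card_powersetCard]
  · intro i _ j _ hij
    rw [Function.onFun, Finset.disjoint_left]
    intro s hs hs'
    simp [Finset.mem_powersetCard_univ] at hs hs'
    omega




/-- Index of a support element, as a natural number below `(supp y).card`. -/
noncomputable def sidx {n : ℕ} (y : Fin n → Bool) (i : Fin n) (h : y i = true) : ℕ :=
  ((Fintype.equivFin (supp y)) ⟨i, mem_supp.mpr h⟩).val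

lemma sidx_lt {n : ℕ} (y : Fin n → Bool) (i : Fin n) (h : y i = true) :
    sidx y i h < (supp y).card := by
  have := ((Fintype.equivFin (supp y)) ⟨i, mem_supp.mpr h⟩).isLt
  simpa [sidx, Fintype.card_coe] using this

lemma sidx_inj {n : ℕ} (y : Fin n → Bool) (i i' : Fin n) (h : y i = true) (h' : y i' = true)
    (he : sidx y i h = sidx y i' h') : i = i' := by
  have : ((Fintype.equivFin (supp y)) ⟨i, mem_supp.mpr h⟩) =
      ((Fintype.equivFin (supp y)) ⟨i', mem_supp.mpr h'⟩) := Fin.ext he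
  have := (Fintype.equivFin (supp y)).injective this
  exact congrArg Subtype.val (by exact_mod_cast this)

noncomputable def gfun {n : ℕ} (p t : ℕ) (hp : 0 < p) (ht : 0 < t)
    (y : Fin n → Bool) (hy : (supp y).card ≤ p * t) (i : Fin n) : Fin p :=
  if h : y i = true then
    ⟨sidx y i h / t, (Nat.div_lt_iff_lt_mul ht).mpr ((sidx_lt y i h).trans_le hy)⟩
  else ⟨0, hp⟩

noncomputable def zeta {n : ℕ} (p t : ℕ) (hp : 0 < p) (ht : 0 < t)
    (y : Fin n → Bool) (hy : (supp y).card ≤ p * t) (k : Fin p) : Fin n → Bool :=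
  fun i => y i && decide (gfun p t hp ht y hy i = k)

lemma wt_zeta_le {n : ℕ} (p t : ℕ) (hp : 0 < p) (ht : 0 < t)
    (y : Fin n → Bool) (hy : (supp y).card ≤ p * t) (k : Fin p) :
    wt (zeta p t hp ht y hy k) ≤ t := by
  rw [wt_eq_card]
  have hle : (supp (zeta p t hp ht y hy k)).card ≤
      (Finset.Ico (k.val * t) (k.val * t + t)).card := by
    apply Finset.card_le_card_of_injOn
      (fun i => if h : y i = true then sidx y i h else 0)
    · intro i hi
      rw [Finset.mem_coe, mem_supp] at hi
      unfold zeta at hi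
      rw [Bool.and_eq_true, decide_eq_true_eq] at hi
      obtain ⟨h1, h2⟩ := hi
      simp only [dif_pos h1]
      have hval : sidx y i h1 / t = k.val := by
        have := congrArg Fin.val h2
        simpa [gfun, dif_pos h1] using this
      rw [Finset.mem_coe, Finset.mem_Ico]
      constructor
      · rw [← hval]; exact Nat.div_mul_le_self _ _
      · rw [← hval]; exact Nat.lt_div_mul_add ht
    · intro i hi i' hi' he
      simp only [Finset.mem_coe, mem_supp] at hi hi'
      unfold zeta at hi hi'
      rw [Bool.and_eq_true] at hi hi'
      obtain ⟨h1, _⟩ := hi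
      obtain ⟨h1', _⟩ := hi'
      simp only [dif_pos h1, dif_pos h1'] at he
      exact sidx_inj y i i' h1 h1' he
  simpa using hle

lemma ip_eq_sum {n : ℕ} (p t : ℕ) (hp : 0 < p) (ht : 0 < t)
    (x y : Fin n → Bool) (hy : (supp y).card ≤ p * t) :
    ip x y = ∑ k : Fin p, ip x (zeta p t hp ht y hy k) := by
  unfold ip zeta
  rw [Finset.sum_comm]
  apply Finset.sum_congr rfl
  intro i _
  by_cases hxy : (x i && y i) = true
  · rw [Bool.and_eq_true] at hxy
    obtain ⟨hx, hyi⟩ := hxy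
    simp only [hx, hyi, Bool.true_and, if_true]
    simp only [hx, hyi, Bool.true_and, decide_eq_true_eq, if_true]
    rw [Finset.sum_ite_eq]
    simp
  · rw [Bool.not_eq_true] at hxy
    simp [← Bool.and_assoc, hxy]

end IPDS

/-- There is a noiseless, zero-error `(p,0,0)`-data structure for the inner
product problem `IP_{n,r}` of length `N = B(n,⌈r/p⌉) = Σ_{i=0}^{⌈r/p⌉} C(n,i)`. -/
theorem ip_noiseless_data_structure_exists (n r p : ℕ)
    (hn : 0 < n) (hr : 0 < r) (hp : 0 < p) (hrn : r ≤ n) :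
    Nonempty (ECDS (Fin n → Bool) {y : Fin n → Bool // wt y ≤ r} (ZMod 2) p
      (∑ i ∈ Finset.range ((r + p - 1) / p + 1), n.choose i) 0 0
      (fun x q => ip x q.val)) := by
  classical
  set t : ℕ := (r + p - 1) / p with htdef
  have htform : t = (r - 1) / p + 1 := by
    rw [htdef, show r + p - 1 = (r - 1) + p by omega, Nat.add_div_right _ hp]
  have ht : 0 < t := by rw [htform]; exact Nat.succ_pos _
  have hrpt : r ≤ p * t := by
    rw [htform]
    exact Nat.le_of_pred_lt (Nat.lt_mul_div_succ (r - 1) hp)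
  set N : ℕ := ∑ i ∈ Finset.range (t + 1), n.choose i with hNdef
  have hcard : Fintype.card {z : Fin n → Bool // wt z ≤ t} = N := IPDS.card_wtle n t
  let σ : {z : Fin n → Bool // wt z ≤ t} ≃ Fin N := Fintype.equivFinOfCardEq hcard
  have hq : ∀ q : {y : Fin n → Bool // wt y ≤ r}, (IPDS.supp q.val).card ≤ p * t :=
    fun q => le_trans (by rw [← IPDS.wt_eq_card]; exact q.prop) hrpt
  refine ⟨{
    enc := fun x j => decide (ip x (σ.symm j).val = 1)
    seeds := 1
    seeds_pos := one_pos
    probe := fun k q s _ =>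
      σ ⟨IPDS.zeta p t hp ht q.val (hq q) k, IPDS.wt_zeta_le p t hp ht q.val (hq q) k⟩
    out := fun q s a => ∑ k : Fin p, if a k then (1 : ZMod 2) else 0
    correct := ?_ }⟩
  intro q x y hdist
  -- δ = 0 forces y = enc x
  have hy0 : y = fun j => decide (ip x (σ.symm j).val = 1) := by
    have h0 : (hammingDist y (fun j => decide (ip x (σ.symm j).val = 1)) : ℝ) ≤ 0 := by
      simpa using hdist
    have hzero : hammingDist y (fun j => decide (ip x (σ.symm j).val = 1)) = 0 := by
      exact_mod_cast le_antisymm (by exact_mod_cast h0) (Nat.zero_le _)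
    exact hammingDist_eq_zero.mp hzero
  have hkey : ∀ s : Fin 1,
      (∑ k : Fin p, if (runAns (fun k q s _ =>
          σ ⟨IPDS.zeta p t hp ht q.val (hq q) k, IPDS.wt_zeta_le p t hp ht q.val (hq q) k⟩)
          y q s) k then (1 : ZMod 2) else 0) = ip x q.val := by
    intro s
    have hrun : ∀ k : Fin p,
        (runAns (fun k q s _ =>
          σ ⟨IPDS.zeta p t hp ht q.val (hq q) k, IPDS.wt_zeta_le p t hp ht q.val (hq q) k⟩)
          y q s) k = decide (ip x (IPDS.zeta p t hp ht q.val (hq q) k) = 1) := by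
      intro k
      rw [runAns, hy0]
      simp [Equiv.symm_apply_apply]
    calc (∑ k : Fin p, if (runAns _ y q s) k then (1 : ZMod 2) else 0)
        = ∑ k : Fin p, if ip x (IPDS.zeta p t hp ht q.val (hq q) k) = 1 then (1 : ZMod 2) else 0 := by
          apply Finset.sum_congr rfl
          intro k _
          rw [hrun k]
          simp
      _ = ∑ k : Fin p, ip x (IPDS.zeta p t hp ht q.val (hq q) k) := by
          apply Finset.sum_congr rfl
          intro k _
          have hv : ∀ v : ZMod 2, (if v = 1 then (1 : ZMod 2) else 0) = v := by decide
          exact hv _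
      _ = ip x q.val := (IPDS.ip_eq_sum p t hp ht x q.val (hq q)).symm
  have hcard1 : ∀ (P : Fin 1 → Prop) [DecidablePred P], P 0 →
      (1 - (0:ℝ)) * ((1:ℕ):ℝ) ≤ ((Finset.univ.filter P).card : ℝ) := by
    intro P _ hP
    have hpos : 0 < (Finset.univ.filter P).card :=
      Finset.card_pos.mpr ⟨0, Finset.mem_filter.mpr ⟨Finset.mem_univ _, hP⟩⟩
    have h1 : (1:ℝ) ≤ ((Finset.univ.filter P).card : ℝ) := by exact_mod_cast hpos
    simpa using h1
  exact hcard1 _ (hkey 0)
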